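/- Let G be a directed graph with source s, t a vertex, and H a graph obtained from G by the out-degree-reducing transformation (edge subdivision plus binary-tree vertex expansion). If H* is a (k+f−1)-FTRS of H, then the subgraph G* of G obtained by keeping an in-edge (w,t) of t if and only if (r_{w,t}, t) ∈ E(H*), and keeping all other edges of G, is a (k+f−1)-FTRS of G, and t has the same in-degree in G* and H*. -/

import Mathlib

open Finset

/-- `p` is a nonempty directed path/walk (as a list of edges) from `s` to `t`
using only edges of `G`. -/
def IsPath {V : Type*} (G : Finset (V × V)) (s t : V) (p : List (V × V)) : Prop :=
  p ≠ [] ∧ (∀ e ∈ p, e ∈ G) ∧ List.Chain' (fun e f => e.2 = f.1) p ∧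
    p.head?.map Prod.fst = some s ∧ p.getLast?.map Prod.snd = some t

/-- `G` contains `r` pairwise edge-disjoint paths from `s` to `t` (unit capacities). -/
def EDP {V : Type*} (G : Finset (V × V)) (s t : V) (r : ℕ) : Prop :=
  ∃ ps : Fin r → List (V × V), (∀ i, IsPath G s t (ps i)) ∧
    ∀ i j, i ≠ j → ∀ e, e ∈ ps i → e ∉ ps j

/-- Max-flow with unit capacities: the maximum number of edge-disjoint `s`-`t` paths. -/
noncomputable def maxFlow {V : Type*} (G : Finset (V × V)) (s t : V) : ℕ :=
  sSup {r | EDP G s t r}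

/-- Directed reachability in the edge set `G`. -/
def Reach {V : Type*} (G : Finset (V × V)) (s t : V) : Prop :=
  Relation.ReflTransGen (fun a b => (a, b) ∈ G) s t

def inEdges {V : Type*} [DecidableEq V] (G : Finset (V × V)) (v : V) : Finset (V × V) :=
  G.filter fun e => e.2 = v

def outDeg {V : Type*} [DecidableEq V] (G : Finset (V × V)) (v : V) : ℕ :=
  (G.filter fun e => e.1 = v).card

/-- `H` is a `(lam, k)` fault-tolerant bounded-flow-preserver of `G` w.r.t. source `s`:
for every set `F` of at most `k` failed edges and every vertex `t`, the `s`-`t` max-flow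
of `H \ F` equals that of `G \ F` whenever the latter is at most `lam`, and is at least
`lam` otherwise. -/
def IsFTBFP {V : Type*} [DecidableEq V] (G H : Finset (V × V)) (s : V) (lam k : ℕ) : Prop :=
  H ⊆ G ∧ ∀ F : Finset (V × V), F.card ≤ k → ∀ t : V,
    (maxFlow (G \ F) s t ≤ lam → maxFlow (H \ F) s t = maxFlow (G \ F) s t) ∧
    (lam < maxFlow (G \ F) s t → lam ≤ maxFlow (H \ F) s t)

/-- `H` is a `j`-fault-tolerant reachability subgraph of `G` w.r.t. source `s`. -/
def IsFTRS {V : Type*} [DecidableEq V] (G H : Finset (V × V)) (s : V) (j : ℕ) : Prop :=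
  H ⊆ G ∧ ∀ F : Finset (V × V), F.card ≤ j → ∀ t : V,
    (Reach (H \ F) s t ↔ Reach (G \ F) s t)

def IsCut {V : Type*} (A : Finset V) (s t : V) : Prop := s ∈ A ∧ t ∉ A

/-- Number of edges of `G` from `A` to its complement. -/
def cutVal {V : Type*} [DecidableEq V] (G : Finset (V × V)) (A : Finset V) : ℕ :=
  (G.filter fun e => e.1 ∈ A ∧ e.2 ∉ A).card

def IsMinCut {V : Type*} [DecidableEq V] (G : Finset (V × V)) (s t : V) (A : Finset V) : Prop :=
  IsCut A s t ∧ ∀ B : Finset V, IsCut B s t → cutVal G A ≤ cutVal G B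

def IsCutS {V : Type*} (S : Finset V) (t : V) (A : Finset V) : Prop := S ⊆ A ∧ t ∉ A

def IsMinCutS {V : Type*} [DecidableEq V] (G : Finset (V × V)) (S : Finset V) (t : V)
    (A : Finset V) : Prop :=
  IsCutS S t A ∧ ∀ B : Finset V, IsCutS S t B → cutVal G A ≤ cutVal G B

/-- Farthest min-cut: the min-cut whose source side contains the source side of
every min-cut. -/
def IsFMC {V : Type*} [DecidableEq V] (G : Finset (V × V)) (S : Finset V) (t : V)
    (A : Finset V) : Prop :=
  IsMinCutS G S t A ∧ ∀ B : Finset V, IsMinCutS G S t B → B ⊆ A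

/-- Vertices outside `A` with an in-edge from `A`. -/
def outSet {V : Type*} [DecidableEq V] (G : Finset (V × V)) (A : Finset V) : Finset V :=
  (G.filter fun e => e.1 ∈ A ∧ e.2 ∉ A).image Prod.snd

open scoped Classical

/-- Vertices of the out-degree-reducing transformation of a graph on `V`:
original vertices, the subdivision vertices `ℓ_{x,y}` (`false`) and `r_{x,y}`
(`true`) of each edge `(x,y)`, and the spine nodes `(x, y, z)` of the binary tree
(a caterpillar, ordered by the linear order on `V`) replacing vertex `y` for its
in-neighbour `x`, one spine node per out-neighbour `z` of `y`. -/
abbrev TW (V : Type*) := V ⊕ ((V × V) × Bool) ⊕ (V × V × V)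

/-- Edges of the transformed graph: `s → ℓ_{s,y}`; `ℓ_{x,y} → r_{x,y}`;
`r_{x,y} → y` when `y ∈ {s,t}`; for `y ∉ {s,t}`, `r_{x,y}` enters the spine of the
binary tree `B_{x,y}` at the smallest out-neighbour of `y`, each spine node
`(x,y,z)` has an edge to the leaf `ℓ_{y,z}` and to the next spine node. -/
def transEdge {V : Type*} [LinearOrder V] (G : Finset (V × V)) (s t : V) :
    TW V × TW V → Prop := fun e =>
  match e with
  | (Sum.inl a, Sum.inr (Sum.inl ((x, y), false))) =>
      a = s ∧ x = s ∧ (s, y) ∈ G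
  | (Sum.inr (Sum.inl ((x, y), false)), Sum.inr (Sum.inl ((x2, y2), true))) =>
      x = x2 ∧ y = y2 ∧ (x, y) ∈ G
  | (Sum.inr (Sum.inl ((x, y), true)), Sum.inl b) =>
      b = y ∧ (y = s ∨ y = t) ∧ (x, y) ∈ G
  | (Sum.inr (Sum.inl ((x, y), true)), Sum.inr (Sum.inr (x2, y2, z))) =>
      x = x2 ∧ y = y2 ∧ y ≠ s ∧ y ≠ t ∧ (x, y) ∈ G ∧
        (y, z) ∈ G ∧ ∀ z2, (y, z2) ∈ G → z ≤ z2
  | (Sum.inr (Sum.inr (x, y, z)), Sum.inr (Sum.inl ((y2, z2), false))) =>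
      y = y2 ∧ z = z2 ∧ y ≠ s ∧ y ≠ t ∧ (x, y) ∈ G ∧ (y, z) ∈ G
  | (Sum.inr (Sum.inr (x, y, z)), Sum.inr (Sum.inr (x2, y2, z2))) =>
      x = x2 ∧ y = y2 ∧ y ≠ s ∧ y ≠ t ∧ (x, y) ∈ G ∧
        (y, z) ∈ G ∧ (y, z2) ∈ G ∧ z < z2 ∧ ∀ w, (y, w) ∈ G → z < w → z2 ≤ w
  | _ => False

noncomputable def transGraph {V : Type*} [Fintype V] [LinearOrder V]
    (G : Finset (V × V)) (s t : V) : Finset (TW V × TW V) :=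
  Finset.univ.filter (transEdge G s t)

section Aux

variable {V : Type*} [Fintype V] [LinearOrder V]

/-- The subdivision edge `ℓ_e → r_e` of the transformed graph. -/
def subdivE (e : V × V) : TW V × TW V :=
  (Sum.inr (Sum.inl (e, false)), Sum.inr (Sum.inl (e, true)))

lemma mem_transGraph {G : Finset (V × V)} {s t : V} {e : TW V × TW V} :
    e ∈ transGraph G s t ↔ transEdge G s t e := by
  simp [transGraph]

lemma reach_mono {W : Type*} {A B : Finset (W × W)} (h : A ⊆ B) {a b : W}
    (hr : Reach A a b) : Reach B a b :=
  by
    unfold Reach at hr ⊢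
    induction hr with
    | refl => exact Relation.ReflTransGen.refl
    | tail _ hbc ih => exact ih.tail (h hbc)

lemma spine_reach {G : Finset (V × V)} {s t : V} {F' : Finset (TW V × TW V)}
    (hF' : ∀ e ∈ F', ∃ a : V × V, e = subdivE a)
    {x y : V} (hys : y ≠ s) (hyt : y ≠ t) (hxy : (x, y) ∈ G) :
    ∀ z, (y, z) ∈ G →
      Reach (transGraph G s t \ F') (Sum.inr (Sum.inl ((x, y), true)))
        (Sum.inr (Sum.inr (x, y, z))) := by
  have key : ∀ n z, (y, z) ∈ G →
      (Finset.univ.filter fun w => (y, w) ∈ G ∧ w < z).card = n →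
      Reach (transGraph G s t \ F') (Sum.inr (Sum.inl ((x, y), true)))
        (Sum.inr (Sum.inr (x, y, z))) := by
    intro n
    induction n using Nat.strong_induction_on with
    | _ n ih =>
      intro z hz hcard
      by_cases hmin : ∀ z2, (y, z2) ∈ G → z ≤ z2
      · refine Relation.ReflTransGen.single ?_
        rw [Finset.mem_sdiff, mem_transGraph]
        refine ⟨⟨rfl, rfl, hys, hyt, hxy, hz, hmin⟩, fun hm => ?_⟩
        obtain ⟨a, ha⟩ := hF' _ hm
        simp [subdivE] at ha
      · push_neg at hmin
        obtain ⟨z2, hz2, hlt⟩ := hmin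
        have hSne : (Finset.univ.filter fun w => (y, w) ∈ G ∧ w < z).Nonempty :=
          ⟨z2, by simp [hz2, hlt]⟩
        set z' := (Finset.univ.filter fun w => (y, w) ∈ G ∧ w < z).max' hSne with hz'def
        have hz'S := (Finset.univ.filter fun w => (y, w) ∈ G ∧ w < z).max'_mem hSne
        rw [Finset.mem_filter] at hz'S
        obtain ⟨-, hz'G, hz'lt⟩ := hz'S
        have hsucc : ∀ w, (y, w) ∈ G → z' < w → z ≤ w := by
          intro w hw hlt2
          by_contra hcon
          push_neg at hcon
          have hwS : w ∈ Finset.univ.filter fun w => (y, w) ∈ G ∧ w < z := by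
            simp [hw, hcon]
          exact absurd (Finset.le_max' _ _ hwS) (not_le.mpr hlt2)
        have hss : (Finset.univ.filter fun w => (y, w) ∈ G ∧ w < z') ⊂
            (Finset.univ.filter fun w => (y, w) ∈ G ∧ w < z) := by
          refine Finset.ssubset_iff_of_subset ?_ |>.mpr ?_
          · intro w hw
            rw [Finset.mem_filter] at hw ⊢
            exact ⟨hw.1, hw.2.1, lt_trans hw.2.2 hz'lt⟩
          · exact ⟨z', by simp only [Finset.mem_filter, Finset.mem_univ, true_and]; exact ⟨hz'G, hz'lt⟩, by simp⟩
        have hcardlt : (Finset.univ.filter fun w => (y, w) ∈ G ∧ w < z').card < n :=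
          hcard ▸ Finset.card_lt_card hss
        have hprev := ih _ hcardlt z' hz'G rfl
        refine hprev.tail ?_
        rw [Finset.mem_sdiff, mem_transGraph]
        refine ⟨⟨rfl, rfl, hys, hyt, hxy, hz'G, hz, hz'lt, hsucc⟩, fun hm => ?_⟩
        obtain ⟨a, ha⟩ := hF' _ hm
        simp [subdivE] at ha
  intro z hz
  exact key _ z hz rfl

lemma lemA {G : Finset (V × V)} {s t : V} (hst : s ≠ t) {F : Finset (V × V)}
    (h : Reach (G \ F) s t) :
    Reach (transGraph G s t \ F.image subdivE) (Sum.inl s) (Sum.inl t) := by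
  have hF' : ∀ e ∈ F.image subdivE, ∃ a : V × V, e = subdivE a := by
    intro e he
    obtain ⟨a, -, ha⟩ := Finset.mem_image.mp he
    exact ⟨a, ha.symm⟩
  have hbase : ∀ z, (s, z) ∈ G →
      Reach (transGraph G s t \ F.image subdivE) (Sum.inl s)
        (Sum.inr (Sum.inl ((s, z), false))) := by
    intro z hz
    refine Relation.ReflTransGen.single ?_
    rw [Finset.mem_sdiff, mem_transGraph]
    refine ⟨⟨rfl, rfl, hz⟩, fun hm => ?_⟩
    obtain ⟨a, ha⟩ := hF' _ hm
    simp [subdivE] at ha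
  have main : ∀ v, Reach (G \ F) s v →
      Reach (transGraph G s t \ F.image subdivE) (Sum.inl s) (Sum.inl t) ∨
      (v ≠ t ∧ ∀ z, (v, z) ∈ G →
        Reach (transGraph G s t \ F.image subdivE) (Sum.inl s)
          (Sum.inr (Sum.inl ((v, z), false)))) := by
    intro v hv
    induction hv with
    | refl => exact Or.inr ⟨hst, hbase⟩
    | @tail b c hsb hbc ih =>
      rcases ih with hL | ⟨hbt, hb⟩
      · exact Or.inl hL
      · obtain ⟨hbcG, hbcF⟩ := Finset.mem_sdiff.mp hbc
        have hlr : ((Sum.inr (Sum.inl ((b, c), false)) : TW V),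
            (Sum.inr (Sum.inl ((b, c), true)) : TW V)) ∈
            transGraph G s t \ F.image subdivE := by
          rw [Finset.mem_sdiff, mem_transGraph]
          refine ⟨⟨rfl, rfl, hbcG⟩, fun hm => ?_⟩
          obtain ⟨a, haF, ha⟩ := Finset.mem_image.mp hm
          simp only [subdivE, Prod.mk.injEq, Sum.inr.injEq, Sum.inl.injEq] at ha
          rw [ha.1.1] at haF
          exact hbcF haF
        by_cases hct : c = t
        · subst hct
          refine Or.inl ?_
          have h1 := hb _ hbcG
          refine (h1.tail hlr).tail ?_
          rw [Finset.mem_sdiff, mem_transGraph]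
          refine ⟨⟨rfl, Or.inr rfl, hbcG⟩, fun hm => ?_⟩
          obtain ⟨a, ha⟩ := hF' _ hm
          simp [subdivE] at ha
        · by_cases hcs : c = s
          · subst hcs
            exact Or.inr ⟨hst, hbase⟩
          · refine Or.inr ⟨hct, fun z hz => ?_⟩
            have h1 := hb c hbcG
            have h3 := spine_reach hF' hcs hct hbcG z hz
            refine ((h1.tail hlr).trans h3).tail ?_
            rw [Finset.mem_sdiff, mem_transGraph]
            refine ⟨⟨rfl, rfl, hcs, hct, hbcG, hz⟩, fun hm => ?_⟩
            obtain ⟨a, ha⟩ := hF' _ hm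
            simp [subdivE] at ha
  rcases main t h with hL | ⟨ht, -⟩
  · exact hL
  · exact absurd rfl ht

/-- The invariant used to project walks of the transformed graph back to `G`. -/
def Qpred (Gstar F : Finset (V × V)) (s : V) : TW V → Prop
  | Sum.inl v => Reach (Gstar \ F) s v
  | Sum.inr (Sum.inl ((x, _), false)) => Reach (Gstar \ F) s x
  | Sum.inr (Sum.inl ((x, y), true)) => Reach (Gstar \ F) s x ∧ (x, y) ∉ F
  | Sum.inr (Sum.inr (_, y, _)) => Reach (Gstar \ F) s y

lemma lemB {G : Finset (V × V)} {s t : V} {F : Finset (V × V)}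
    {Hstar : Finset (TW V × TW V)} (hsub : Hstar ⊆ transGraph G s t)
    {Gstar : Finset (V × V)}
    (hGstar : Gstar = G.filter fun e => e.2 = t →
        ((Sum.inr (Sum.inl ((e.1, t), true)) : TW V), (Sum.inl t : TW V)) ∈ Hstar)
    (h : Reach (Hstar \ F.image subdivE) (Sum.inl s) (Sum.inl t)) :
    Reach (Gstar \ F) s t := by
  suffices hQ : ∀ w, Reach (Hstar \ F.image subdivE) (Sum.inl s) w → Qpred Gstar F s w from
    hQ _ h
  intro w hw
  induction hw with
  | refl => exact Relation.ReflTransGen.refl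
  | @tail b c hsb hbc ih =>
    obtain ⟨hbcH, hbcF⟩ := Finset.mem_sdiff.mp hbc
    have te := mem_transGraph.mp (hsub hbcH)
    match b, c, ih, te with
    | Sum.inl a, Sum.inl v, ih, te => exact te.elim
    | Sum.inl a, Sum.inr (Sum.inl ((x, y), false)), ih, te =>
      obtain ⟨-, rfl, -⟩ := te
      exact Relation.ReflTransGen.refl
    | Sum.inl a, Sum.inr (Sum.inl ((x, y), true)), ih, te => exact te.elim
    | Sum.inl a, Sum.inr (Sum.inr (x, y, z)), ih, te => exact te.elim
    | Sum.inr (Sum.inl ((x, y), false)), Sum.inl v, ih, te => exact te.elim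
    | Sum.inr (Sum.inl ((x, y), false)), Sum.inr (Sum.inl ((x2, y2), false)), ih, te =>
      exact te.elim
    | Sum.inr (Sum.inl ((x, y), false)), Sum.inr (Sum.inl ((x2, y2), true)), ih, te =>
      obtain ⟨rfl, rfl, hG⟩ := te
      refine ⟨ih, fun hF => hbcF ?_⟩
      exact Finset.mem_image_of_mem _ hF
    | Sum.inr (Sum.inl ((x, y), false)), Sum.inr (Sum.inr (x2, y2, z)), ih, te => exact te.elim
    | Sum.inr (Sum.inl ((x, y), true)), Sum.inl v, ih, te =>
      obtain ⟨rfl, hst2, hG⟩ := te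
      rcases hst2 with rfl | rfl
      · exact Relation.ReflTransGen.refl
      · refine ih.1.tail ?_
        rw [Finset.mem_sdiff]
        refine ⟨?_, ih.2⟩
        rw [hGstar, Finset.mem_filter]
        exact ⟨hG, fun _ => hbcH⟩
    | Sum.inr (Sum.inl ((x, y), true)), Sum.inr (Sum.inl ((x2, y2), b2)), ih, te =>
      cases b2 <;> exact te.elim
    | Sum.inr (Sum.inl ((x, y), true)), Sum.inr (Sum.inr (x2, y2, z)), ih, te =>
      obtain ⟨rfl, rfl, hys, hyt, hG, -⟩ := te
      refine ih.1.tail ?_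
      rw [Finset.mem_sdiff]
      refine ⟨?_, ih.2⟩
      rw [hGstar, Finset.mem_filter]
      exact ⟨hG, fun hy => absurd hy hyt⟩
    | Sum.inr (Sum.inr (x, y, z)), Sum.inl v, ih, te => exact te.elim
    | Sum.inr (Sum.inr (x, y, z)), Sum.inr (Sum.inl ((y2, z2), false)), ih, te =>
      obtain ⟨rfl, rfl, -⟩ := te
      exact ih
    | Sum.inr (Sum.inr (x, y, z)), Sum.inr (Sum.inl ((y2, z2), true)), ih, te => exact te.elim
    | Sum.inr (Sum.inr (x, y, z)), Sum.inr (Sum.inr (x2, y2, z2)), ih, te =>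
      obtain ⟨rfl, rfl, -⟩ := te
      exact ih

end Aux



/-- if `H*` is a `(k+f-1)`-FTRS of the transformed graph `H` of `G`
(where `f = maxflow(s,t,G)`), then the subgraph `G*` of `G` keeping an in-edge
`(w,t)` iff `(r_{w,t}, t) ∈ H*` (and keeping all other edges) is a `(k+f-1)`-FTRS
of `G`, and `t` has the same in-degree in `G*` and `H*`. -/
theorem stmt_13 {V : Type*} [Fintype V] [LinearOrder V]
    (G : Finset (V × V)) (s t : V) (hst : s ≠ t)
    (k f : ℕ) (hf : f = maxFlow G s t)
    (Hstar : Finset (TW V × TW V))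
    (hFTRS : IsFTRS (transGraph G s t) Hstar (Sum.inl s) (k + f - 1))
    (Gstar : Finset (V × V))
    (hGstar : Gstar = G.filter fun e => e.2 = t →
        ((Sum.inr (Sum.inl ((e.1, t), true)) : TW V), (Sum.inl t : TW V)) ∈ Hstar) :
    IsFTRS G Gstar s (k + f - 1) ∧
    (inEdges Gstar t).card = (inEdges Hstar (Sum.inl t)).card := by
  classical
  obtain ⟨hHsub, hH⟩ := hFTRS
  have hsubG : Gstar ⊆ G := by
    rw [hGstar]; exact Finset.filter_subset _ _
  have key : ∀ F : Finset (V × V), F.card ≤ k + f - 1 →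
      Reach (G \ F) s t → Reach (Gstar \ F) s t := by
    intro F hF hr
    have hA := lemA hst hr
    have hcard : (F.image subdivE).card ≤ k + f - 1 :=
      le_trans Finset.card_image_le hF
    have hB := (hH _ hcard (Sum.inl t)).mpr (by convert hA using 2; exact congrArg _ (Subsingleton.elim _ _))
    refine lemB hHsub hGstar ?_
    convert hB using 2; exact congrArg _ (Subsingleton.elim _ _)
  constructor
  · refine ⟨hsubG, fun F hF u => ⟨fun h => reach_mono (Finset.sdiff_subset_sdiff hsubG le_rfl) h, fun h => ?_⟩⟩
    induction h with
    | refl => exact Relation.ReflTransGen.refl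
    | @tail b c hsb hbc ih =>
      obtain ⟨hbcG, hbcF⟩ := Finset.mem_sdiff.mp hbc
      by_cases hct : c = t
      · subst hct
        exact key F hF (hsb.tail hbc)
      · refine ih.tail ?_
        rw [Finset.mem_sdiff]
        refine ⟨?_, hbcF⟩
        rw [hGstar, Finset.mem_filter]
        exact ⟨hbcG, fun hy => absurd hy hct⟩
  · unfold inEdges
    refine Finset.card_bij
      (fun e _ => ((Sum.inr (Sum.inl ((e.1, t), true)) : TW V), (Sum.inl t : TW V)))
      ?_ ?_ ?_
    · intro e he
      rw [Finset.mem_filter] at he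
      obtain ⟨heG, he2⟩ := he
      rw [hGstar, Finset.mem_filter] at heG
      rw [Finset.mem_filter]
      exact ⟨heG.2 he2, rfl⟩
    · intro e1 h1 e2 h2 heq
      rw [Finset.mem_filter] at h1 h2
      simp only [Prod.mk.injEq, Sum.inr.injEq, Sum.inl.injEq] at heq
      exact Prod.ext heq.1.1.1 (h1.2.trans h2.2.symm)
    · rintro ⟨b1, b2⟩ hb
      rw [Finset.mem_filter] at hb
      obtain ⟨hbH, hb2⟩ := hb
      simp only at hb2
      subst hb2
      have te := mem_transGraph.mp (hHsub hbH)
      match b1, te with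
      | Sum.inl a, te => exact te.elim
      | Sum.inr (Sum.inl ((x, y), false)), te => exact te.elim
      | Sum.inr (Sum.inl ((x, y), true)), te =>
        obtain ⟨hy, -, hG⟩ := te
        subst hy
        refine ⟨(x, t), ?_, rfl⟩
        rw [Finset.mem_filter]
        refine ⟨?_, rfl⟩
        rw [hGstar, Finset.mem_filter]
        exact ⟨hG, fun _ => hbH⟩
      | Sum.inr (Sum.inr (x, y, z)), te => exact te.elim
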